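/- Every graph with no induced subgraph isomorphic to the three-edge path P4 is perfect. -/

import Mathlib

open SimpleGraph

/-- The clique number of a graph: the largest size of a clique. -/
noncomputable def cliqueNumber {V : Type*} [Fintype V] (G : SimpleGraph V) : ℕ :=
  sSup {n | ∃ s : Finset V, G.IsNClique n s}

/-- A graph is perfect if every induced subgraph has chromatic number
equal to its clique number. -/
def IsPerfect {V : Type*} [Fintype V] (G : SimpleGraph V) : Prop :=
  ∀ s : Finset V,
    (G.induce (↑s : Set V)).chromaticNumber = (cliqueNumber (G.induce (↑s : Set V)) : ℕ∞)

lemma p4_of_vertices {V : Type*} (G : SimpleGraph V) {a b c d : V}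
    (hab : G.Adj a b) (hbc : G.Adj b c) (hcd : G.Adj c d)
    (hac : ¬ G.Adj a c) (had : ¬ G.Adj a d) (hbd : ¬ G.Adj b d)
    (hac' : a ≠ c) (had' : a ≠ d) (hbd' : b ≠ d) :
    Nonempty (pathGraph 4 ↪g G) := by
  have hab' := G.ne_of_adj hab
  have hbc' := G.ne_of_adj hbc
  have hcd' := G.ne_of_adj hcd
  refine ⟨⟨⟨![a,b,c,d], ?_⟩, ?_⟩⟩
  · intro i j hij
    fin_cases i <;> fin_cases j <;> simp_all
  · intro i j
    fin_cases i <;> fin_cases j <;> simp [pathGraph_adj, G.adj_comm] <;> tauto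

/-- In a P4-free graph, a maximal independent set meets every maximal clique. -/
lemma meets {V : Type*} (G : SimpleGraph V)
    (hfree : IsEmpty (pathGraph 4 ↪g G)) {S K : Finset V}
    (hSind : ∀ x ∈ S, ∀ y ∈ S, x ≠ y → ¬ G.Adj x y)
    (hSmax : ∀ v ∉ S, ∃ s ∈ S, G.Adj v s)
    (hK : G.IsClique (K : Set V))
    (hKmax : ∀ v ∉ K, ∃ k ∈ K, ¬ G.Adj v k)
    (hKne : K.Nonempty) :
    ∃ x, x ∈ K ∧ x ∈ S := by
  classical
  by_contra hdis
  push_neg at hdis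
  have hKS : ∀ k ∈ K, k ∉ S := hdis
  -- S is nonempty
  obtain ⟨k, hk⟩ := hKne
  obtain ⟨s0, hs0S, _⟩ := hSmax k (hKS k hk)
  -- choose s in S maximizing #neighbors in K
  obtain ⟨s, hsS, hsmax⟩ := Finset.exists_max_image S
    (fun v => (K.filter (fun x => G.Adj v x)).card) ⟨s0, hs0S⟩
  have hsK : s ∉ K := fun h => hKS s h hsS
  obtain ⟨k0, hk0K, hk0⟩ := hKmax s hsK
  obtain ⟨s', hs'S, hk0s'⟩ := hSmax k0 (hKS k0 hk0K)
  have hss' : s' ≠ s := by rintro rfl; exact hk0 hk0s'.symm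
  set A := K.filter (fun x => G.Adj s x) with hA
  set B := K.filter (fun x => G.Adj s' x) with hB
  have hk0B : k0 ∈ B := Finset.mem_filter.mpr ⟨hk0K, hk0s'.symm⟩
  have hk0A : k0 ∉ A := fun h => hk0 (Finset.mem_filter.mp h).2
  have hnotsub : ¬ A ⊆ B := by
    intro hsub
    have : A ⊂ B := ⟨hsub, fun h => hk0A (h hk0B)⟩
    exact absurd (hsmax s' hs'S) (by simpa using Finset.card_lt_card this)
  obtain ⟨k1, hk1A, hk1B⟩ := Finset.not_subset.mp hnotsub
  have hk1K : k1 ∈ K := (Finset.mem_filter.mp hk1A).1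
  have hsk1 : G.Adj s k1 := (Finset.mem_filter.mp hk1A).2
  have hs'k1 : ¬ G.Adj s' k1 := fun h => hk1B (Finset.mem_filter.mpr ⟨hk1K, h⟩)
  have hk1k0 : k1 ≠ k0 := fun h => hk0A (h ▸ hk1A)
  have hadjk : G.Adj k1 k0 := hK hk1K hk0K hk1k0
  have hsk0ne : s ≠ k0 := fun h => hsK (h ▸ hk0K)
  have hk1s' : k1 ≠ s' := fun h => hKS k1 hk1K (h ▸ hs'S)
  exact hfree.false (Classical.choice (p4_of_vertices G hsk1 hadjk hk0s'
    hk0 (fun h => hSind s hsS s' hs'S (Ne.symm hss') h) (fun h => hs'k1 h.symm)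
    hsk0ne (Ne.symm hss') hk1s'))

lemma exists_maximal_clique {V : Type*} [Fintype V] (G : SimpleGraph V)
    (K0 : Finset V) (hK0 : G.IsClique (K0 : Set V)) :
    ∃ K : Finset V, K0 ⊆ K ∧ G.IsClique (K : Set V) ∧ ∀ v ∉ K, ∃ k ∈ K, ¬ G.Adj v k := by
  classical
  obtain ⟨K, hKmem, hKmax⟩ := Finset.exists_max_image
    ((Finset.univ : Finset (Finset V)).filter (fun K => K0 ⊆ K ∧ G.IsClique (K : Set V)))
    Finset.card ⟨K0, by simp [hK0]⟩
  simp only [Finset.mem_filter, Finset.mem_univ, true_and] at hKmem hKmax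
  refine ⟨K, hKmem.1, hKmem.2, fun v hv => ?_⟩
  by_contra h
  push_neg at h
  have hins : G.IsClique ((insert v K : Finset V) : Set V) := by
    rw [Finset.coe_insert]
    exact hKmem.2.insert (fun b hb _ => h b hb)
  have := hKmax (insert v K) ⟨hKmem.1.trans (Finset.subset_insert _ _), hins⟩
  rw [Finset.card_insert_of_notMem hv] at this
  omega

lemma bddAbove_cliques {V : Type*} [Fintype V] (G : SimpleGraph V) :
    BddAbove {n | ∃ s : Finset V, G.IsNClique n s} := by
  refine ⟨Fintype.card V, fun n ⟨s, hs⟩ => ?_⟩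
  rw [← hs.2]
  exact Finset.card_le_card (Finset.subset_univ s) |>.trans (by simp)

lemma le_cliqueNumber {V : Type*} [Fintype V] {G : SimpleGraph V} {n : ℕ} {s : Finset V}
    (h : G.IsNClique n s) : n ≤ cliqueNumber G :=
  le_csSup (bddAbove_cliques G) ⟨s, h⟩

lemma exists_cliqueNumber {V : Type*} [Fintype V] (G : SimpleGraph V) :
    ∃ s : Finset V, G.IsNClique (cliqueNumber G) s :=
  by
  have hne : {n | ∃ s : Finset V, G.IsNClique n s}.Nonempty := ⟨0, ⟨∅, by simp⟩⟩
  exact Nat.sSup_mem hne (bddAbove_cliques G)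

lemma cliqueNumber_le_of_colorable {V : Type*} [Fintype V] {G : SimpleGraph V} {n : ℕ}
    (h : G.Colorable n) : cliqueNumber G ≤ n := by
  by_contra hlt
  push_neg at hlt
  obtain ⟨s, hs⟩ := exists_cliqueNumber G
  obtain ⟨t, hts, htcard⟩ := Finset.exists_subset_card_eq (show n + 1 ≤ s.card by rw [hs.2]; omega)
  · exact h.cliqueFree (Nat.lt_succ_self n) t ⟨hs.1.subset hts, htcard⟩

universe u

lemma p4free_colorable_cliqueNumber (n : ℕ) : ∀ (V : Type u) [Fintype V] (G : SimpleGraph V),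
    Fintype.card V ≤ n → IsEmpty (pathGraph 4 ↪g G) → G.Colorable (cliqueNumber G) := by
  induction n with
  | zero =>
    intro V _ G hcard _
    have : IsEmpty V := Fintype.card_eq_zero_iff.mp (le_antisymm hcard (Nat.zero_le _))
    exact Colorable.of_isEmpty (G := G) _
  | succ n ih =>
    intro V _ G hcard hfree
    classical
    by_cases hV : IsEmpty V
    · exact Colorable.of_isEmpty (G := G) _
    rw [not_isEmpty_iff] at hV
    -- a maximal independent set S
    obtain ⟨S, -, hScl, hSmax'⟩ := exists_maximal_clique Gᶜ ∅ (by simp)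
    have hSind : ∀ x ∈ S, ∀ y ∈ S, x ≠ y → ¬ G.Adj x y := fun x hx y hy hxy =>
      (hScl hx hy hxy).2
    have hSmax : ∀ v ∉ S, ∃ s ∈ S, G.Adj v s := by
      intro v hv
      obtain ⟨s, hsS, hns⟩ := hSmax' v hv
      refine ⟨s, hsS, ?_⟩
      rw [compl_adj] at hns
      push_neg at hns
      exact hns (fun h => hv (h ▸ hsS))
    have hSne : S.Nonempty := by
      by_contra h
      rw [Finset.not_nonempty_iff_eq_empty] at h
      obtain ⟨s, hsS, -⟩ := hSmax hV.some (by simp [h])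
      simp [h] at hsS
    -- the induced subgraph on the complement of S
    set T : Set V := (↑(Sᶜ : Finset V) : Set V) with hT
    set G' := G.induce T with hG'
    have hfree' : IsEmpty (pathGraph 4 ↪g G') :=
      ⟨fun f => hfree.false ((Embedding.induce T).comp f)⟩
    have hcard' : Fintype.card T ≤ n := by
      have h1 : Fintype.card T = (Sᶜ : Finset V).card :=
        Fintype.card_of_finset' Sᶜ (by intro x; simp [hT])
      rw [h1, Finset.card_compl]
      have h2 := Finset.card_pos.mpr hSne
      omega
    have hcol' := ih T G' hcard' hfree'
    -- cliqueNumber G' + 1 ≤ cliqueNumber G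
    obtain ⟨t, ht⟩ := exists_cliqueNumber G'
    set t' : Finset V := t.map (Function.Embedding.subtype _) with ht'
    have ht'cl : G.IsClique (t' : Set V) := by
      intro x hx y hy hxy
      simp only [ht', Finset.coe_map, Set.mem_image, Finset.mem_coe,
        Function.Embedding.coe_subtype] at hx hy
      obtain ⟨a, ha, rfl⟩ := hx
      obtain ⟨b, hb, rfl⟩ := hy
      have hab : a ≠ b := fun h => hxy (by rw [h])
      exact ht.1 ha hb hab
    have ht'S : ∀ x ∈ t', x ∉ S := by
      intro x hx
      simp only [ht', Finset.mem_map, Function.Embedding.coe_subtype] at hx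
      obtain ⟨⟨a, haT⟩, -, rfl⟩ := hx
      simp only [hT, Finset.coe_compl, Set.mem_compl_iff, Finset.mem_coe] at haT
      exact haT
    obtain ⟨K, ht'K, hKcl, hKmax⟩ := exists_maximal_clique G t' ht'cl
    have hKne : K.Nonempty := by
      by_cases hv0 : hV.some ∈ K
      · exact ⟨hV.some, hv0⟩
      · obtain ⟨k, hk, -⟩ := hKmax hV.some hv0
        exact ⟨k, hk⟩
    obtain ⟨x, hxK, hxS⟩ := meets G hfree hSind hSmax hKcl hKmax hKne
    have hxt' : x ∉ t' := fun h => ht'S x h hxS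
    have hssub : t' ⊂ K := ⟨ht'K, fun h => hxt' (h hxK)⟩
    have hcardlt : cliqueNumber G' + 1 ≤ K.card := by
      have := Finset.card_lt_card hssub
      have ht'card : t'.card = cliqueNumber G' := by
        rw [ht', Finset.card_map, ht.2]
      omega
    have hle : cliqueNumber G' + 1 ≤ cliqueNumber G := by
      exact hcardlt.trans (le_cliqueNumber ⟨hKcl, rfl⟩)
    -- color G with cliqueNumber G' + 1 colors
    obtain ⟨c'⟩ := hcol'
    have hcolG : G.Colorable (cliqueNumber G' + 1) := by
      have C : G.Coloring (Option (Fin (cliqueNumber G'))) := by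
        refine Coloring.mk
          (fun v => if h : v ∈ S then none
            else some (c' ⟨v, by simp [hT, h]⟩)) ?_
        intro v w hvw hcc
        by_cases hv : v ∈ S
        · by_cases hw : w ∈ S
          · exact hSind v hv w hw (G.ne_of_adj hvw) hvw
          · simp [hv, hw] at hcc
        · by_cases hw : w ∈ S
          · simp [hv, hw] at hcc
          · simp only [hv, hw, dif_neg, not_false_iff] at hcc
            have hadj : G'.Adj ⟨v, by simp [hT, hv]⟩ ⟨w, by simp [hT, hw]⟩ := hvw
            exact c'.valid hadj (Option.some_injective _ hcc)
      have hcc := C.colorable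
      simpa using hcc
    exact hcolG.mono hle

lemma chrom_eq_cliqueNumber {V : Type*} [Fintype V] (G : SimpleGraph V)
    (hfree : IsEmpty (pathGraph 4 ↪g G)) :
    G.chromaticNumber = (cliqueNumber G : ℕ∞) := by
  have hc := p4free_colorable_cliqueNumber (Fintype.card V) V G le_rfl hfree
  refine le_antisymm hc.chromaticNumber_le ?_
  have h2 := G.colorable_chromaticNumber_of_fintype
  have h3 : cliqueNumber G ≤ (G.chromaticNumber).toNat := cliqueNumber_le_of_colorable h2
  have hne : G.chromaticNumber ≠ ⊤ :=
    (lt_of_le_of_lt hc.chromaticNumber_le (WithTop.coe_lt_top _)).ne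
  calc (cliqueNumber G : ℕ∞) ≤ ((G.chromaticNumber).toNat : ℕ∞) := by exact_mod_cast h3
    _ = G.chromaticNumber := ENat.coe_toNat hne

theorem p4_free_perfect {V : Type*} [Fintype V] (G : SimpleGraph V)
    (hfree : IsEmpty (pathGraph 4 ↪g G)) :
    IsPerfect G := by
  intro s
  exact chrom_eq_cliqueNumber _ ⟨fun f => hfree.false ((Embedding.induce _).comp f)⟩
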